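/- Let D be a nonnegative integrable real-valued random variable on a probability space, and let 0 < c < p be real numbers (unit cost and unit price). Set q := F_D⁻¹((p−c)/p), the ((p−c)/p)-quantile of D. Then q maximizes the expected newsvendor profit: for every Q ∈ ℝ, p·E[min(D, Q)] − c·Q ≤ p·E[min(D, q)] − c·q. -/

import Mathlib

open MeasureTheory ProbabilityTheory Set Filter Topology

/-- The quantile function of a distribution on `ℝ`: `F⁻¹(t) = inf {x | t ≤ F(x)}`. -/
noncomputable def quantile (μ : Measure ℝ) (t : ℝ) : ℝ :=
  sInf {x : ℝ | t ≤ cdf μ x}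

section Aux

set_option linter.unusedSectionVars false

variable {Ω : Type*} [MeasurableSpace Ω] (P : Measure Ω) [IsProbabilityMeasure P]
  (D : Ω → ℝ)

/-- Tail probability function. -/
noncomputable def nvTail (P : Measure Ω) (D : Ω → ℝ) (s : ℝ) : ℝ :=
  (P {ω | s ≤ D ω}).toReal

lemma nvTail_antitone : Antitone (nvTail P D) := by
  intro a b hab
  exact ENNReal.toReal_mono (measure_ne_top _ _)
    (measure_mono (fun ω h => le_trans hab h))

lemma nvTail_nonneg (s : ℝ) : 0 ≤ nvTail P D s := ENNReal.toReal_nonneg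

lemma nvTail_le_one (s : ℝ) : nvTail P D s ≤ 1 := by
  have := measure_mono (μ := P) (subset_univ {ω | s ≤ D ω})
  simpa [nvTail] using ENNReal.toReal_mono (by simp) this

lemma nvTail_integrableOn (a b : ℝ) :
    IntegrableOn (nvTail P D) (Set.Ioc a b) := by
  refine Measure.integrableOn_of_bounded (M := 1)
    (by rw [Real.volume_Ioc]; exact ENNReal.ofReal_ne_top) ?_ ?_
  · exact ((nvTail_antitone P D).measurable).aestronglyMeasurable
  · refine Filter.Eventually.of_forall fun s => ?_
    rw [Real.norm_eq_abs, abs_of_nonneg (nvTail_nonneg P D s)]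
    exact nvTail_le_one P D s

lemma nvCompl_toReal (A : Set Ω) (hA : MeasurableSet A) :
    (P Aᶜ).toReal = 1 - (P A).toReal := by
  rw [prob_compl_eq_one_sub hA, ENNReal.toReal_sub_of_le prob_le_one (by simp)]
  simp

lemma nvMinIntegral (hDm : Measurable D) (hnn : ∀ ω, 0 ≤ D ω) (hint : Integrable D P)
    {Q : ℝ} (hQ : 0 ≤ Q) :
    ∫ ω, min (D ω) Q ∂P = ∫ s in Set.Ioc 0 Q, nvTail P D s := by
  have hintm : Integrable (fun ω => min (D ω) Q) P := by
    have := hint.inf (integrable_const Q)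
    exact this
  rw [hintm.integral_eq_integral_Ioc_meas_le
    (Filter.Eventually.of_forall fun ω => le_min (hnn ω) hQ)
    (Filter.Eventually.of_forall fun ω => min_le_right _ _)]
  refine setIntegral_congr_fun measurableSet_Ioc fun s hs => ?_
  have hset : {a | s ≤ min (D a) Q} = {ω | s ≤ D ω} := by
    ext ω
    simp only [Set.mem_setOf_eq, le_min_iff, and_iff_left hs.2]
  rw [hset]
  rfl

end Aux

/-- The `((p-c)/p)`-quantile of demand maximizes the expected newsvendor profit. -/
theorem newsvendor_quantile_maximizes_profit {Ω : Type*} [MeasurableSpace Ω]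
    (P : Measure Ω) [IsProbabilityMeasure P] (D : Ω → ℝ)
    (hDm : Measurable D) (hnn : ∀ ω, 0 ≤ D ω) (hint : Integrable D P)
    (p c : ℝ) (hc : 0 < c) (hcp : c < p) :
    ∀ Q : ℝ,
      p * ∫ ω, min (D ω) Q ∂P - c * Q ≤
        p * ∫ ω, min (D ω) (quantile (Measure.map D P) ((p - c) / p)) ∂P
          - c * quantile (Measure.map D P) ((p - c) / p) := by
  have hp : 0 < p := hc.trans hcp
  set μ := Measure.map D P with hμ
  have hμprob : IsProbabilityMeasure μ := Measure.isProbabilityMeasure_map hDm.aemeasurable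
  set t' : ℝ := (p - c) / p with ht'
  have ht'pos : 0 < t' := div_pos (by linarith) hp
  have ht'lt : t' < 1 := by
    rw [ht', div_lt_one hp]; linarith
  have hFeq : ∀ x, cdf μ x = (P {ω | D ω ≤ x}).toReal := by
    intro x
    rw [cdf_eq_real, measureReal_def, hμ, Measure.map_apply hDm measurableSet_Iic]
    rfl
  set S : Set ℝ := {x : ℝ | t' ≤ cdf μ x} with hS
  have hSne : S.Nonempty := by
    have h1 : ∀ᶠ x in atTop, t' ≤ cdf μ x :=
      (tendsto_cdf_atTop μ).eventually (eventually_ge_nhds ht'lt)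
    exact h1.exists
  have hFneg : ∀ x : ℝ, x < 0 → cdf μ x = 0 := by
    intro x hx0
    rw [hFeq]
    have : {ω | D ω ≤ x} = (∅ : Set Ω) := by
      ext ω; simp only [Set.mem_setOf_eq, Set.mem_empty_iff_false, iff_false, not_le]
      exact lt_of_lt_of_le hx0 (hnn ω)
    simp [this]
  have hSpos : ∀ x ∈ S, (0:ℝ) ≤ x := by
    intro x hx
    have hx' : t' ≤ cdf μ x := hx
    by_contra h
    push_neg at h
    rw [hFneg x h] at hx'
    exact absurd hx' (not_le.mpr ht'pos)
  have hSbdd : BddBelow S := ⟨0, hSpos⟩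
  set q : ℝ := quantile μ t' with hq
  have hq0 : 0 ≤ q := le_csInf hSne hSpos
  -- t' ≤ cdf μ q
  have hqcdf : t' ≤ cdf μ q := by
    have hrc : ContinuousWithinAt (cdf μ) (Set.Ici q) q := (cdf μ).right_continuous q
    have htd : Tendsto (cdf μ) (𝓝[>] q) (𝓝 (cdf μ q)) :=
      hrc.tendsto.mono_left (nhdsWithin_mono q Set.Ioi_subset_Ici_self)
    refine ge_of_tendsto htd ?_
    filter_upwards [self_mem_nhdsWithin] with x hx
    obtain ⟨y, hyS, hyx⟩ : ∃ y ∈ S, y < x := by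
      by_contra h
      push_neg at h
      have : x ≤ q := le_csInf hSne h
      exact absurd hx (not_lt.mpr this)
    exact le_trans hyS (monotone_cdf μ hyx.le)
  -- below q, cdf < t'
  have hbelow : ∀ s, s < q → cdf μ s < t' := by
    intro s hs
    by_contra h
    push_neg at h
    exact absurd (csInf_le hSbdd h) (not_le.mpr hs)
  -- tail bounds
  have htail_lo : ∀ s, s < q → 1 - t' ≤ nvTail P D s := by
    intro s hs
    have h1 : (P {ω | D ω ≤ s}ᶜ).toReal ≤ nvTail P D s := by
      refine ENNReal.toReal_mono (measure_ne_top _ _) (measure_mono ?_)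
      intro ω hω
      simp only [Set.mem_compl_iff, Set.mem_setOf_eq, not_le] at hω
      exact hω.le
    rw [nvCompl_toReal P _ (measurableSet_le hDm measurable_const), ← hFeq] at h1
    linarith [hbelow s hs]
  have htail_hi : ∀ s, q < s → nvTail P D s ≤ 1 - t' := by
    intro s hs
    have h1 : nvTail P D s ≤ (P {ω | D ω ≤ q}ᶜ).toReal := by
      refine ENNReal.toReal_mono (measure_ne_top _ _) (measure_mono ?_)
      intro ω hω
      simp only [Set.mem_compl_iff, Set.mem_setOf_eq, not_le]
      exact lt_of_lt_of_le hs hω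
    rw [nvCompl_toReal P _ (measurableSet_le hDm measurable_const), ← hFeq] at h1
    linarith [hqcdf]
  have hpc : p * (1 - t') = c := by
    have := hp.ne'; rw [ht', mul_sub, mul_one, mul_div_assoc', mul_comm p (p - c), mul_div_assoc, div_self this]; ring
  -- main inequality for nonneg Q
  have main : ∀ Q : ℝ, 0 ≤ Q →
      p * ∫ ω, min (D ω) Q ∂P - c * Q ≤
        p * ∫ ω, min (D ω) q ∂P - c * q := by
    intro Q hQ
    rw [nvMinIntegral P D hDm hnn hint hQ, nvMinIntegral P D hDm hnn hint hq0]
    rcases le_or_gt Q q with hcase | hcase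
    · -- Q ≤ q : split Ioc 0 q = Ioc 0 Q ∪ Ioc Q q
      have hsplit : ∫ s in Set.Ioc 0 q, nvTail P D s =
          (∫ s in Set.Ioc 0 Q, nvTail P D s) + ∫ s in Set.Ioc Q q, nvTail P D s := by
        rw [← setIntegral_union (Set.Ioc_disjoint_Ioc_of_le le_rfl) measurableSet_Ioc
          (nvTail_integrableOn P D 0 Q) (nvTail_integrableOn P D Q q),
          Set.Ioc_union_Ioc_eq_Ioc hQ hcase]
      rw [hsplit]
      have hvol : (volume (Set.Ioo Q q)).toReal = q - Q := by
        rw [Real.volume_Ioo, ENNReal.toReal_ofReal (by linarith)]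
      have hbound : (q - Q) * (1 - t') ≤ ∫ s in Set.Ioc Q q, nvTail P D s := by
        rw [integral_Ioc_eq_integral_Ioo]
        have hmono := setIntegral_mono_on (f := fun _ => (1 - t' : ℝ))
          (g := nvTail P D)
          (integrableOn_const (by
            rw [Real.volume_Ioo]; exact ENNReal.ofReal_ne_top))
          ((nvTail_integrableOn P D Q q).mono_set Set.Ioo_subset_Ioc_self)
          measurableSet_Ioo (fun s hs => htail_lo s hs.2)
        rw [setIntegral_const, measureReal_def, hvol, smul_eq_mul] at hmono
        exact hmono
      nlinarith [hpc]
    · -- q < Q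
      have hsplit : ∫ s in Set.Ioc 0 Q, nvTail P D s =
          (∫ s in Set.Ioc 0 q, nvTail P D s) + ∫ s in Set.Ioc q Q, nvTail P D s := by
        rw [← setIntegral_union (Set.Ioc_disjoint_Ioc_of_le le_rfl) measurableSet_Ioc
          (nvTail_integrableOn P D 0 q) (nvTail_integrableOn P D q Q),
          Set.Ioc_union_Ioc_eq_Ioc hq0 hcase.le]
      rw [hsplit]
      have hvol : (volume (Set.Ioc q Q)).toReal = Q - q := by
        rw [Real.volume_Ioc, ENNReal.toReal_ofReal (by linarith)]
      have hbound : ∫ s in Set.Ioc q Q, nvTail P D s ≤ (Q - q) * (1 - t') := by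
        have hmono := setIntegral_mono_on (g := fun _ => (1 - t' : ℝ))
          (f := nvTail P D)
          (nvTail_integrableOn P D q Q)
          (integrableOn_const (by
            rw [Real.volume_Ioc]; exact ENNReal.ofReal_ne_top))
          measurableSet_Ioc (fun s hs => htail_hi s hs.1)
        rw [setIntegral_const, measureReal_def, hvol, smul_eq_mul] at hmono
        exact hmono
      nlinarith [hpc]
  intro Q
  rcases le_or_gt 0 Q with hQ | hQ
  · exact main Q hQ
  · -- Q < 0 : min (D ω) Q = Q
    have hmin : ∀ ω, min (D ω) Q = Q := fun ω => min_eq_right (le_trans hQ.le (hnn ω))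
    have hQint : ∫ ω, min (D ω) Q ∂P = Q := by
      simp only [hmin]; simp
    rw [hQint]
    have h0 := main 0 le_rfl
    have h00 : ∫ ω, min (D ω) (0:ℝ) ∂P = 0 := by
      have : ∀ ω, min (D ω) (0:ℝ) = 0 := fun ω => min_eq_right (hnn ω)
      simp only [this]; simp
    rw [h00] at h0
    have hneg : p * Q - c * Q ≤ p * 0 - c * 0 := by nlinarith
    calc p * Q - c * Q ≤ p * 0 - c * 0 := hneg
      _ ≤ _ := by simpa using h0
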